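/- For every positive integer t, the number of integer lattice points in t·T_{(1,2)} equals the number of integer lattice points in t·T_{(1,4)}, where T_{(1,2)} = Conv((1/5,0), (0,1/5), (1/5,1/5)) and T_{(1,4)} = Conv((2/5,0), (1/5,1/5), (2/5,1/5)). Both counts are given by the quasi-polynomial: t²/50 + 3t/50 − 2/25 if t ≡ 1 (mod 5); t²/50 + t/50 − 3/25 if t ≡ 2; t²/50 − t/50 − 3/25 if t ≡ 3; t²/50 − 3t/50 − 2/25 if t ≡ 4; t²/50 + 3t/10 + 1 if t ≡ 0 (mod 5). -/

import Mathlib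

noncomputable section

/-- The Ehrhart counting function: the number of integer lattice points in the
`t`-th dilate of `P ⊆ ℝ²`. -/
def ehr (P : Set (ℝ × ℝ)) (t : ℕ) : ℕ :=
  Set.ncard {z : ℤ × ℤ |
    ((z.1 : ℝ), (z.2 : ℝ)) ∈ (fun x : ℝ × ℝ => ((t : ℝ) * x.1, (t : ℝ) * x.2)) '' P}

/-- `T_{(1,2)} = Conv((1/5,0), (0,1/5), (1/5,1/5))`. -/
def T12 : Set (ℝ × ℝ) :=
  convexHull ℝ ({((1 : ℝ) / 5, (0 : ℝ)), (0, (1 : ℝ) / 5), ((1 : ℝ) / 5, (1 : ℝ) / 5)} :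
    Set (ℝ × ℝ))

/-- `T_{(1,4)} = Conv((2/5,0), (1/5,1/5), (2/5,1/5))`. -/
def T14 : Set (ℝ × ℝ) :=
  convexHull ℝ ({((2 : ℝ) / 5, (0 : ℝ)), ((1 : ℝ) / 5, (1 : ℝ) / 5), ((2 : ℝ) / 5, (1 : ℝ) / 5)} :
    Set (ℝ × ℝ))

/-! ### Auxiliary counting lemmas -/

open Finset in
/-- The discrete triangle `{(x, y) : ℕ × ℕ | x + y ≤ n}` as a finset. -/
def triD (n : ℕ) : Finset (ℕ × ℕ) := (range (n+1)).biUnion (fun k => antidiagonal k)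

lemma mem_triD {n : ℕ} {p : ℕ × ℕ} : p ∈ triD n ↔ p.1 + p.2 ≤ n := by
  simp only [triD, Finset.mem_biUnion, Finset.mem_range, Finset.HasAntidiagonal.mem_antidiagonal,
    Nat.lt_succ_iff]
  constructor
  · rintro ⟨k, hk, rfl⟩; exact hk
  · intro h; exact ⟨_, h, rfl⟩

lemma card_triD (n : ℕ) : (triD n).card * 2 = (n+1)*(n+2) := by
  rw [triD, Finset.card_biUnion]
  · have : ∀ k ∈ Finset.range (n+1), (Finset.HasAntidiagonal.antidiagonal k).card = k + 1 := by
      intro k _; exact Finset.Nat.card_antidiagonal k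
    rw [Finset.sum_congr rfl this, Finset.sum_add_distrib, Finset.sum_const, add_mul,
      Finset.sum_range_id_mul_two]
    simp; ring
  · intro x _ y _ hxy
    rw [Function.onFun, Finset.disjoint_left]
    intro p hp hp'
    rw [Finset.HasAntidiagonal.mem_antidiagonal] at hp hp'
    exact hxy (hp ▸ hp')

lemma ncard_tri (a b c : ℤ) (n : ℕ) (h : (n:ℤ) = a + b - c) :
    Set.ncard {z : ℤ × ℤ | z.1 ≤ a ∧ z.2 ≤ b ∧ c ≤ z.1 + z.2} * 2 = (n+1) * (n+2) := by
  have hset : {z : ℤ × ℤ | z.1 ≤ a ∧ z.2 ≤ b ∧ c ≤ z.1 + z.2} =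
      ↑((triD n).image (fun p : ℕ × ℕ => ((a - p.1 : ℤ), (b - p.2 : ℤ)))) := by
    ext z
    simp only [Set.mem_setOf_eq, Finset.coe_image, Set.mem_image, Finset.mem_coe, mem_triD,
      Prod.ext_iff]
    constructor
    · rintro ⟨h1, h2, h3⟩
      refine ⟨((a - z.1).toNat, (b - z.2).toNat), ?_, ?_, ?_⟩ <;> simp <;> omega
    · rintro ⟨p, hp, h1, h2⟩
      refine ⟨?_, ?_, ?_⟩ <;> omega
  rw [hset, Set.ncard_coe_finset, Finset.card_image_of_injective, card_triD]
  intro p q hpq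
  simp only [Prod.ext_iff] at hpq ⊢
  omega

lemma ncard_tri_empty (a b c : ℤ) (h : a + b < c) :
    Set.ncard {z : ℤ × ℤ | z.1 ≤ a ∧ z.2 ≤ b ∧ c ≤ z.1 + z.2} = 0 := by
  convert Set.ncard_empty (ℤ × ℤ)
  ext z; simp only [Set.mem_setOf_eq, Set.mem_empty_iff_false, iff_false]
  rintro ⟨h1, h2, h3⟩; omega

/-! ### Half-plane descriptions of the triangles -/

lemma mem_hull_triple {A B C p : ℝ × ℝ} {a b c : ℝ} (ha : 0 ≤ a) (hb : 0 ≤ b) (hc : 0 ≤ c)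
    (habc : a + b + c = 1) (hp : a • A + b • B + c • C = p) :
    p ∈ convexHull ℝ ({A, B, C} : Set (ℝ × ℝ)) := by
  have h := Finset.centerMass_mem_convexHull (t := (Finset.univ : Finset (Fin 3)))
    (w := ![a, b, c]) (s := ({A, B, C} : Set (ℝ × ℝ))) (z := ![A, B, C])
    (by intro i _; fin_cases i <;> assumption)
    (by rw [Fin.sum_univ_three]; simp only [Matrix.cons_val_zero, Matrix.cons_val_one,
        Matrix.head_cons, Matrix.cons_val_two, Matrix.tail_cons, habc]; norm_num)
    (by intro i _; fin_cases i <;> simp)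
  rw [Finset.centerMass, Fin.sum_univ_three, Fin.sum_univ_three] at h
  simp only [Matrix.cons_val_zero, Matrix.cons_val_one, Matrix.head_cons, Matrix.cons_val_two,
    Matrix.tail_cons] at h
  rw [habc] at h
  rwa [inv_one, one_smul, hp] at h

lemma convex_tri (α β γ : ℝ) : Convex ℝ {p : ℝ × ℝ | p.1 ≤ α ∧ p.2 ≤ β ∧ γ ≤ p.1 + p.2} := by
  intro x hx y hy a b ha hb hab
  obtain ⟨hx1, hx2, hx3⟩ := hx
  obtain ⟨hy1, hy2, hy3⟩ := hy
  have e1 : a * α + b * α = α := by rw [← add_mul, hab, one_mul]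
  have e2 : a * β + b * β = β := by rw [← add_mul, hab, one_mul]
  have e3 : a * γ + b * γ = γ := by rw [← add_mul, hab, one_mul]
  refine ⟨?_, ?_, ?_⟩ <;>
    simp only [Prod.fst_add, Prod.snd_add, Prod.smul_fst, Prod.smul_snd, smul_eq_mul] <;>
    nlinarith [mul_le_mul_of_nonneg_left hx1 ha, mul_le_mul_of_nonneg_left hy1 hb,
      mul_le_mul_of_nonneg_left hx2 ha, mul_le_mul_of_nonneg_left hy2 hb,
      mul_le_mul_of_nonneg_left hx3 ha, mul_le_mul_of_nonneg_left hy3 hb]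

lemma T12_eq : T12 = {p : ℝ × ℝ | p.1 ≤ 1/5 ∧ p.2 ≤ 1/5 ∧ 1/5 ≤ p.1 + p.2} := by
  apply subset_antisymm
  · apply convexHull_min _ (convex_tri _ _ _)
    rintro p hp
    simp only [Set.mem_insert_iff, Set.mem_singleton_iff] at hp
    rcases hp with rfl | rfl | rfl <;> norm_num
  · rintro ⟨x, y⟩ ⟨h1, h2, h3⟩
    exact mem_hull_triple (a := 1 - 5*y) (b := 1 - 5*x) (c := 5*x + 5*y - 1)
      (by simp at h2 ⊢; linarith) (by simp at h1 ⊢; linarith) (by simp at h3 ⊢; linarith)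
      (by ring)
      (by simp [Prod.ext_iff, Prod.smul_fst]; constructor <;> ring)

lemma T14_eq : T14 = {p : ℝ × ℝ | p.1 ≤ 2/5 ∧ p.2 ≤ 1/5 ∧ 2/5 ≤ p.1 + p.2} := by
  apply subset_antisymm
  · apply convexHull_min _ (convex_tri _ _ _)
    rintro p hp
    simp only [Set.mem_insert_iff, Set.mem_singleton_iff] at hp
    rcases hp with rfl | rfl | rfl <;> norm_num
  · rintro ⟨x, y⟩ ⟨h1, h2, h3⟩
    exact mem_hull_triple (a := 1 - 5*y) (b := 2 - 5*x) (c := 5*x + 5*y - 2)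
      (by simp at h2 ⊢; linarith) (by simp at h1 ⊢; linarith) (by simp at h3 ⊢; linarith)
      (by ring)
      (by simp [Prod.ext_iff, Prod.smul_fst]; constructor <;> ring)

/-! ### Lattice points of the dilates -/

lemma mem_scaled (na nb nc : ℤ) (t : ℕ) (ht : 0 < t) (z : ℤ × ℤ) (α β γ : ℝ)
    (hα : 5 * α = (na : ℝ)) (hβ : 5 * β = (nb : ℝ)) (hγ : 5 * γ = (nc : ℝ)) :
    ((z.1 : ℝ), (z.2 : ℝ)) ∈ (fun x : ℝ × ℝ => ((t : ℝ) * x.1, (t : ℝ) * x.2)) ''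
      {p : ℝ × ℝ | p.1 ≤ α ∧ p.2 ≤ β ∧ γ ≤ p.1 + p.2} ↔
    (5 * z.1 ≤ na * t ∧ 5 * z.2 ≤ nb * t ∧ nc * t ≤ 5 * (z.1 + z.2)) := by
  have ht' : (0 : ℝ) < t := by exact_mod_cast ht
  constructor
  · rintro ⟨⟨x, y⟩, ⟨h1, h2, h3⟩, hf⟩
    simp only [Prod.ext_iff] at hf
    obtain ⟨e1, e2⟩ := hf
    refine ⟨?_, ?_, ?_⟩
    · have : (5 * z.1 : ℝ) ≤ na * t := by
        rw [← e1, ← hα]; nlinarith [mul_le_mul_of_nonneg_left h1 ht'.le]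
      exact_mod_cast this
    · have : (5 * z.2 : ℝ) ≤ nb * t := by
        rw [← e2, ← hβ]; nlinarith [mul_le_mul_of_nonneg_left h2 ht'.le]
      exact_mod_cast this
    · have : (nc * t : ℝ) ≤ 5 * (z.1 + z.2) := by
        rw [← hγ]
        push_cast [← e1, ← e2]
        nlinarith [mul_le_mul_of_nonneg_left h3 ht'.le]
      exact_mod_cast this
  · rintro ⟨h1, h2, h3⟩
    have h1' : (5 * z.1 : ℝ) ≤ na * t := by exact_mod_cast h1
    have h2' : (5 * z.2 : ℝ) ≤ nb * t := by exact_mod_cast h2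
    have h3' : (nc * t : ℝ) ≤ 5 * (z.1 + z.2) := by exact_mod_cast h3
    refine ⟨((z.1 : ℝ) / t, (z.2 : ℝ) / t), ⟨?_, ?_, ?_⟩, ?_⟩
    · rw [div_le_iff₀ ht']; nlinarith
    · rw [div_le_iff₀ ht']; nlinarith
    · rw [← add_div, le_div_iff₀ ht']; push_cast at h3' ⊢; nlinarith
    · simp only [Prod.ext_iff]
      constructor <;> field_simp

lemma ehr_T12 (t : ℕ) (ht : 0 < t) :
    ehr T12 t * 2 = (if t % 5 = 0 then (t/5+1)*(t/5+2) else (t/5)*(t/5+1)) := by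
  unfold ehr
  rw [T12_eq]
  have hmem := fun z => mem_scaled 1 1 1 t ht z (1/5) (1/5) (1/5)
    (by norm_num) (by norm_num) (by norm_num)
  by_cases h5 : t % 5 = 0
  · have hs : {z : ℤ × ℤ | ((z.1 : ℝ), (z.2 : ℝ)) ∈
        (fun x : ℝ × ℝ => ((t : ℝ) * x.1, (t : ℝ) * x.2)) ''
        {p : ℝ × ℝ | p.1 ≤ 1/5 ∧ p.2 ≤ 1/5 ∧ 1/5 ≤ p.1 + p.2}} =
        {z : ℤ × ℤ | z.1 ≤ ((t/5 : ℕ) : ℤ) ∧ z.2 ≤ ((t/5 : ℕ) : ℤ) ∧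
          ((t/5 : ℕ) : ℤ) ≤ z.1 + z.2} := by
      ext z
      rw [Set.mem_setOf_eq, Set.mem_setOf_eq, hmem z]
      omega
    rw [hs, ncard_tri _ _ _ (t/5) (by push_cast; ring), if_pos h5]
  · rw [if_neg h5]
    by_cases hq0 : t / 5 = 0
    · have hs : {z : ℤ × ℤ | ((z.1 : ℝ), (z.2 : ℝ)) ∈
          (fun x : ℝ × ℝ => ((t : ℝ) * x.1, (t : ℝ) * x.2)) ''
          {p : ℝ × ℝ | p.1 ≤ 1/5 ∧ p.2 ≤ 1/5 ∧ 1/5 ≤ p.1 + p.2}} =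
          {z : ℤ × ℤ | z.1 ≤ (0:ℤ) ∧ z.2 ≤ (0:ℤ) ∧ (1:ℤ) ≤ z.1 + z.2} := by
        ext z
        rw [Set.mem_setOf_eq, Set.mem_setOf_eq, hmem z]
        omega
      rw [hs, ncard_tri_empty _ _ _ (by norm_num), hq0]
    · have hs : {z : ℤ × ℤ | ((z.1 : ℝ), (z.2 : ℝ)) ∈
          (fun x : ℝ × ℝ => ((t : ℝ) * x.1, (t : ℝ) * x.2)) ''
          {p : ℝ × ℝ | p.1 ≤ 1/5 ∧ p.2 ≤ 1/5 ∧ 1/5 ≤ p.1 + p.2}} =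
          {z : ℤ × ℤ | z.1 ≤ ((t/5 : ℕ) : ℤ) ∧ z.2 ≤ ((t/5 : ℕ) : ℤ) ∧
            ((t/5 : ℕ) : ℤ) + 1 ≤ z.1 + z.2} := by
        ext z
        rw [Set.mem_setOf_eq, Set.mem_setOf_eq, hmem z]
        omega
      rw [hs, ncard_tri _ _ _ (t/5 - 1) (by push_cast [hq0]; omega)]
      have h1 : t/5 - 1 + 1 = t/5 := by omega
      have h2 : t/5 - 1 + 2 = t/5 + 1 := by omega
      rw [h1, h2]

lemma ehr_T14 (t : ℕ) (ht : 0 < t) :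
    ehr T14 t * 2 = (if t % 5 = 0 then (t/5+1)*(t/5+2) else (t/5)*(t/5+1)) := by
  unfold ehr
  rw [T14_eq]
  have hmem := fun z => mem_scaled 2 1 2 t ht z (2/5) (1/5) (2/5)
    (by norm_num) (by norm_num) (by norm_num)
  by_cases h5 : t % 5 = 0
  · have hs : {z : ℤ × ℤ | ((z.1 : ℝ), (z.2 : ℝ)) ∈
        (fun x : ℝ × ℝ => ((t : ℝ) * x.1, (t : ℝ) * x.2)) ''
        {p : ℝ × ℝ | p.1 ≤ 2/5 ∧ p.2 ≤ 1/5 ∧ 2/5 ≤ p.1 + p.2}} =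
        {z : ℤ × ℤ | z.1 ≤ (2*(t/5 : ℕ) : ℤ) ∧ z.2 ≤ ((t/5 : ℕ) : ℤ) ∧
          (2*(t/5 : ℕ) : ℤ) ≤ z.1 + z.2} := by
      ext z
      rw [Set.mem_setOf_eq, Set.mem_setOf_eq, hmem z]
      omega
    rw [hs, ncard_tri _ _ _ (t/5) (by push_cast; ring), if_pos h5]
  · rw [if_neg h5]
    by_cases hq0 : t / 5 = 0
    · have hs : {z : ℤ × ℤ | ((z.1 : ℝ), (z.2 : ℝ)) ∈
          (fun x : ℝ × ℝ => ((t : ℝ) * x.1, (t : ℝ) * x.2)) ''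
          {p : ℝ × ℝ | p.1 ≤ 2/5 ∧ p.2 ≤ 1/5 ∧ 2/5 ≤ p.1 + p.2}} =
          {z : ℤ × ℤ | z.1 ≤ ((2*t/5 : ℕ) : ℤ) ∧ z.2 ≤ (0:ℤ) ∧
            ((2*t/5 : ℕ) : ℤ) + 1 ≤ z.1 + z.2} := by
        ext z
        rw [Set.mem_setOf_eq, Set.mem_setOf_eq, hmem z]
        omega
      rw [hs, ncard_tri_empty _ _ _ (by omega), hq0]
    · have hs : {z : ℤ × ℤ | ((z.1 : ℝ), (z.2 : ℝ)) ∈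
          (fun x : ℝ × ℝ => ((t : ℝ) * x.1, (t : ℝ) * x.2)) ''
          {p : ℝ × ℝ | p.1 ≤ 2/5 ∧ p.2 ≤ 1/5 ∧ 2/5 ≤ p.1 + p.2}} =
          {z : ℤ × ℤ | z.1 ≤ ((2*t/5 : ℕ) : ℤ) ∧ z.2 ≤ ((t/5 : ℕ) : ℤ) ∧
            ((2*t/5 : ℕ) : ℤ) + 1 ≤ z.1 + z.2} := by
        ext z
        rw [Set.mem_setOf_eq, Set.mem_setOf_eq, hmem z]
        omega
      rw [hs, ncard_tri _ _ _ (t/5 - 1) (by push_cast; omega)]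
      have h1 : t/5 - 1 + 1 = t/5 := by omega
      have h2 : t/5 - 1 + 2 = t/5 + 1 := by omega
      rw [h1, h2]

/-- `T_{(1,2)}` and `T_{(1,4)}` are Ehrhart equivalent, with the
common Ehrhart quasi-polynomial given explicitly. -/
theorem ehrhart_T12_eq_T14 (t : ℕ) (ht : 0 < t) :
    ehr T12 t = ehr T14 t ∧
    (ehr T12 t : ℚ) =
      (if t % 5 = 1 then (t : ℚ) ^ 2 / 50 + 3 * t / 50 - 2 / 25
       else if t % 5 = 2 then (t : ℚ) ^ 2 / 50 + t / 50 - 3 / 25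
       else if t % 5 = 3 then (t : ℚ) ^ 2 / 50 - t / 50 - 3 / 25
       else if t % 5 = 4 then (t : ℚ) ^ 2 / 50 - 3 * t / 50 - 2 / 25
       else (t : ℚ) ^ 2 / 50 + 3 * t / 10 + 1) := by
  have h12 := ehr_T12 t ht
  have h14 := ehr_T14 t ht
  constructor
  · omega
  · have hqr : 5 * (t / 5) + t % 5 = t := Nat.div_add_mod t 5
    set q : ℕ := t / 5 with hq
    by_cases h5 : t % 5 = 0
    · rw [if_pos h5] at h12
      have ht5 : (t : ℚ) = 5 * q := by
        have : t = 5 * q := by omega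
        exact_mod_cast congrArg (Nat.cast : ℕ → ℚ) this
      have h2 : (ehr T12 t : ℚ) * 2 = (q + 1) * (q + 2) := by exact_mod_cast h12
      rw [if_neg (by omega), if_neg (by omega), if_neg (by omega), if_neg (by omega), ht5]
      linear_combination h2 / 2
    · rw [if_neg h5] at h12
      have h2 : (ehr T12 t : ℚ) * 2 = q * (q + 1) := by exact_mod_cast h12
      have hr : t % 5 = 1 ∨ t % 5 = 2 ∨ t % 5 = 3 ∨ t % 5 = 4 := by omega
      rcases hr with hr | hr | hr | hr
      · have ht5 : (t : ℚ) = 5 * q + 1 := by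
          have : t = 5 * q + 1 := by omega
          exact_mod_cast congrArg (Nat.cast : ℕ → ℚ) this
        rw [if_pos hr, ht5]; linear_combination h2 / 2
      · have ht5 : (t : ℚ) = 5 * q + 2 := by
          have : t = 5 * q + 2 := by omega
          exact_mod_cast congrArg (Nat.cast : ℕ → ℚ) this
        rw [if_neg (by omega), if_pos hr, ht5]; linear_combination h2 / 2
      · have ht5 : (t : ℚ) = 5 * q + 3 := by
          have : t = 5 * q + 3 := by omega
          exact_mod_cast congrArg (Nat.cast : ℕ → ℚ) this
        rw [if_neg (by omega), if_neg (by omega), if_pos hr, ht5]; linear_combination h2 / 2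
      · have ht5 : (t : ℚ) = 5 * q + 4 := by
          have : t = 5 * q + 4 := by omega
          exact_mod_cast congrArg (Nat.cast : ℕ → ℚ) this
        rw [if_neg (by omega), if_neg (by omega), if_neg (by omega), if_pos hr, ht5]
        linear_combination h2 / 2
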